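/- The CADI-CADI discount function satisfies the delay CADI condition: for all T, t₁, t₂, t₃ and all σ, if F(t₁,T)/F(t₂,T) = F(t₂,T)/F(t₃,T), then F(t₁+σ,T)/F(t₂+σ,T) = F(t₂+σ,T)/F(t₃+σ,T). -/

import Mathlib

theorem cadi_cadi_delay_CADI (r δ γ : ℝ) (hr : 0 < r) (hδ : 0 < δ) (hγ : γ ≠ 0)
    (F : ℝ → ℝ → ℝ)
    (hF : ∀ t T, F t T = Real.exp (-r * Real.exp (-δ * t) * (1 - Real.exp (-γ * T)) / γ))
    (T t₁ t₂ t₃ σ : ℝ)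
    (h : F t₁ T / F t₂ T = F t₂ T / F t₃ T) :
    F (t₁ + σ) T / F (t₂ + σ) T = F (t₂ + σ) T / F (t₃ + σ) T := by
  simp only [hF, ← Real.exp_sub] at h ⊢
  have h' := Real.exp_injective h
  have key : -r * Real.exp (-δ * t₁) * (1 - Real.exp (-γ * T)) / γ -
      -r * Real.exp (-δ * t₂) * (1 - Real.exp (-γ * T)) / γ =
      -r * Real.exp (-δ * t₂) * (1 - Real.exp (-γ * T)) / γ -
      -r * Real.exp (-δ * t₃) * (1 - Real.exp (-γ * T)) / γ := h'
  congr 1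
  have e : ∀ t : ℝ, Real.exp (-δ * (t + σ)) = Real.exp (-δ * t) * Real.exp (-δ * σ) := by
    intro t; rw [← Real.exp_add]; ring_nf
  rw [e t₁, e t₂, e t₃]
  simp only [neg_mul] at key ⊢
  field_simp at key ⊢
  linear_combination key
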